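/- For every integer d ≥ 0, the homogeneous degree-d component (with respect to the grading on A in which the variable x_k has degree k) of the subspace span_ℂ{P_{n,m} : m ≥ n ≥ 0} of A has dimension ⌊d/2⌋ + 1. -/

import Mathlib

open MvPolynomial

noncomputable section

/-- The polynomial ring `A = ℂ[x₁, x₂, x₃, …]`, with variables indexed by
the positive integers (`X k` is the variable `x_k`). -/
abbrev A : Type := MvPolynomial ℕ+ ℂ

/-- The elementary Schur polynomials `S_k`, defined by the generating identity
`∑_{k≥0} S_k z^k = exp(∑_{n≥1} (x_n/(2n)) z^n)`; equivalently, `S_0 = 1` and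
`(k+1) S_{k+1} = ∑_{j=0}^{k} (x_{k+1-j}/2) S_j` (obtained by differentiating in `z`). -/
noncomputable def S : ℕ → A
  | 0 => 1
  | (k+1) =>
      ((k : ℂ) + 1)⁻¹ • ∑ j ∈ (Finset.range (k+1)).attach,
        (MvPolynomial.C (2⁻¹ : ℂ) * MvPolynomial.X ((k - j.1).succPNat)) * S j.1
  termination_by k => k
  decreasing_by
    have := j.2; simp only [Finset.mem_range] at this; omega

/-- The generalized binomial coefficient `C(1/2, k) = (1/2)(1/2−1)⋯(1/2−k+1)/k!`. -/
noncomputable def halfChoose (k : ℕ) : ℂ :=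
  (∏ i ∈ Finset.range k, ((2⁻¹ : ℂ) - (i : ℂ))) / (k.factorial : ℂ)

/-- `P_{n,m} = ∑_{k=0}^{n} (−1)^k C(1/2,k) S_{m+k} S_{n−k}`. -/
noncomputable def P (n m : ℕ) : A :=
  ∑ k ∈ Finset.range (n+1), ((-1 : ℂ)^k * halfChoose k) • (S (m+k) * S (n-k))

/-- The extremal vectors `φ_n = P_{n,n}`. -/
noncomputable def phi (n : ℕ) : A := P n n

/-- The translation operator `D(p) = x₁·p + ∑_{n≥1} n·x_{n+1}·∂p/∂x_n`
(the sum is finite on each polynomial: only the variables occurring in `p` contribute,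
since `∂p/∂x_n = 0` for `n ∉ p.vars`). -/
noncomputable def D (p : A) : A :=
  MvPolynomial.X 1 * p +
    ∑ n ∈ p.vars, ((n : ℕ) : ℂ) • (MvPolynomial.X (n + 1) * MvPolynomial.pderiv n p)

end

noncomputable section
open Finset

lemma S_zero : S 0 = 1 := by rw [S]

lemma S_succ (k : ℕ) : S (k+1) = ((k:ℂ)+1)⁻¹ •
    ∑ j ∈ Finset.range (k+1), (MvPolynomial.C (2⁻¹ : ℂ) * MvPolynomial.X ((k - j).succPNat)) * S j := by
  rw [S]
  congr 1
  exact Finset.sum_attach (Finset.range (k+1)) (fun j => (MvPolynomial.C (2⁻¹ : ℂ) * MvPolynomial.X ((k - j).succPNat)) * S j)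

def Efun : A →ₗ[ℂ] ℂ where
  toFun := MvPolynomial.constantCoeff
  map_add' p q := map_add _ p q
  map_smul' c p := by simp [MvPolynomial.constantCoeff_smul]

def D1 (a : ℕ+) : A →ₗ[ℂ] ℂ := Efun.comp (MvPolynomial.pderiv a).toLinearMap

def D2 (a b : ℕ+) : A →ₗ[ℂ] ℂ :=
  Efun.comp ((MvPolynomial.pderiv a).toLinearMap.comp (MvPolynomial.pderiv b).toLinearMap)

lemma Efun_apply (p : A) : Efun p = MvPolynomial.constantCoeff p := rfl
lemma D1_apply (a : ℕ+) (p : A) : D1 a p = MvPolynomial.constantCoeff (MvPolynomial.pderiv a p) := rfl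
lemma D2_apply (a b : ℕ+) (p : A) :
    D2 a b p = MvPolynomial.constantCoeff (MvPolynomial.pderiv a (MvPolynomial.pderiv b p)) := rfl

lemma Efun_mul (p q : A) : Efun (p * q) = Efun p * Efun q := map_mul MvPolynomial.constantCoeff p q

lemma D1_mul (a : ℕ+) (p q : A) : D1 a (p * q) = D1 a p * Efun q + Efun p * D1 a q := by
  simp [D1_apply, Efun_apply, MvPolynomial.pderiv_mul]; ring

lemma D2_mul (a b : ℕ+) (p q : A) :
    D2 a b (p * q) = D2 a b p * Efun q + D1 b p * D1 a q + D1 a p * D1 b q + Efun p * D2 a b q := by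
  simp only [D2_apply, D1_apply, Efun_apply, MvPolynomial.pderiv_mul, map_add, map_mul]
  ring

end

noncomputable section
open Finset MvPolynomial

lemma Efun_S (k : ℕ) : Efun (S k) = if k = 0 then 1 else 0 := by
  cases k with
  | zero => simp [S_zero, Efun_apply]
  | succ k =>
    rw [S_succ, map_smul, map_sum]
    simp only [Efun_apply, map_mul, constantCoeff_X, constantCoeff_C]
    simp

lemma D1_X_mul (a v : ℕ+) (p : A) :
    D1 a (MvPolynomial.X v * p) = if v = a then Efun p else 0 := by
  rw [D1_mul]
  by_cases h : v = a
  · subst h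
    simp [D1_apply, Efun_apply, MvPolynomial.pderiv_X_self]
  · have h2 : a ≠ v := fun hh => h hh.symm
    simp [D1_apply, Efun_apply, MvPolynomial.pderiv_X_of_ne (fun hh => h hh), h]

lemma D2_X_mul (a b v : ℕ+) (p : A) :
    D2 a b (MvPolynomial.X v * p) =
      (if v = a then D1 b p else 0) + (if v = b then D1 a p else 0) := by
  simp only [D2_apply, MvPolynomial.pderiv_mul, map_add, map_mul]
  by_cases hb : v = b
  · subst hb
    by_cases ha : v = a
    · subst ha
      simp [MvPolynomial.pderiv_X_self, D1_apply, Efun_apply, MvPolynomial.pderiv_mul]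
      try ring
    · simp [MvPolynomial.pderiv_X_self, MvPolynomial.pderiv_X_of_ne (fun hh : v = a => ha hh),
        D1_apply, Efun_apply, MvPolynomial.pderiv_mul, ha]
  · by_cases ha : v = a
    · subst ha
      simp [MvPolynomial.pderiv_X_self, MvPolynomial.pderiv_X_of_ne (fun hh : v = b => hb hh),
        D1_apply, Efun_apply, MvPolynomial.pderiv_mul, hb]
    · simp [MvPolynomial.pderiv_X_of_ne (fun hh : v = b => hb hh),
        MvPolynomial.pderiv_X_of_ne (fun hh : v = a => ha hh),
        D1_apply, Efun_apply, MvPolynomial.pderiv_mul, ha, hb]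

lemma CXS_smul (v : ℕ+) (p : A) :
    (MvPolynomial.C (2⁻¹ : ℂ) * MvPolynomial.X v) * p = (2⁻¹ : ℂ) • (MvPolynomial.X v * p) := by
  rw [mul_assoc, ← MvPolynomial.smul_eq_C_mul]

lemma succPNat_eq_iff (j : ℕ) (a : ℕ+) : j.succPNat = a ↔ j + 1 = (a : ℕ) := by
  constructor
  · intro h; rw [← h]; rfl
  · intro h; apply PNat.coe_injective; rw [← h]; rfl

lemma D1_S (a : ℕ+) (k : ℕ) :
    D1 a (S k) = if k = (a : ℕ) then ((2 * (a : ℕ) : ℕ) : ℂ)⁻¹ else 0 := by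
  induction k using Nat.strong_induction_on with
  | _ k ih =>
  cases k with
  | zero =>
    rw [S_zero, if_neg (by have := a.pos; omega)]
    simp [D1_apply]
  | succ k =>
    rw [S_succ, map_smul, map_sum]
    have hterm : ∀ j ∈ Finset.range (k+1),
        D1 a ((MvPolynomial.C (2⁻¹ : ℂ) * MvPolynomial.X ((k - j).succPNat)) * S j)
          = if j = 0 then (if k + 1 = (a:ℕ) then (2⁻¹:ℂ) else 0) else 0 := by
      intro j hj
      rw [CXS_smul, map_smul, D1_X_mul, Efun_S]
      by_cases hj0 : j = 0
      · subst hj0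
        simp only [Nat.sub_zero, if_pos rfl, succPNat_eq_iff]
        split_ifs <;> simp
      · simp [hj0]
    rw [Finset.sum_congr rfl hterm, Finset.sum_ite_eq' (Finset.range (k+1)) 0,
      if_pos (Finset.mem_range.mpr (Nat.succ_pos k))]
    split_ifs with h
    · have ha : ((a:ℕ) : ℂ) = (k : ℂ) + 1 := by rw [← h]; push_cast; ring
      push_cast [smul_eq_mul]
      rw [ha, mul_inv]
      ring
    · simp

end

noncomputable section
open Finset MvPolynomial

lemma D2_S (a b : ℕ+) (k : ℕ) :
    D2 a b (S k) = if k = (a : ℕ) + (b : ℕ) then ((4 * (a:ℕ) * (b:ℕ) : ℕ) : ℂ)⁻¹ else 0 := by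
  induction k using Nat.strong_induction_on with
  | _ k ih =>
  cases k with
  | zero =>
    rw [S_zero, if_neg (by have := a.pos; have := b.pos; omega)]
    simp [D2_apply]
  | succ k =>
    rw [S_succ, map_smul, map_sum]
    have hterm : ∀ j ∈ Finset.range (k+1),
        D2 a b ((MvPolynomial.C (2⁻¹ : ℂ) * MvPolynomial.X ((k - j).succPNat)) * S j)
          = (if j = (b:ℕ) then (if k + 1 = (a:ℕ) + (b:ℕ) then (2⁻¹:ℂ) * ((2 * (b:ℕ) : ℕ) : ℂ)⁻¹ else 0) else 0)
            + (if j = (a:ℕ) then (if k + 1 = (a:ℕ) + (b:ℕ) then (2⁻¹:ℂ) * ((2 * (a:ℕ) : ℕ) : ℂ)⁻¹ else 0) else 0) := by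
      intro j hj
      have hjk : j ≤ k := by simpa [Nat.lt_succ_iff] using hj
      rw [CXS_smul, map_smul, D2_X_mul, D1_S, D1_S, smul_eq_mul]
      simp only [succPNat_eq_iff]
      have hb1 := b.pos
      have ha1 := a.pos
      split_ifs <;>
        first
          | ring1
          | (exfalso; omega)
          | (have hba : ((a:ℕ):ℂ) = ((b:ℕ):ℂ) := by
               exact_mod_cast congrArg (Nat.cast : ℕ → ℂ) (by omega : (a:ℕ) = (b:ℕ))
             push_cast
             rw [hba]
             ring)
    rw [Finset.sum_congr rfl hterm, Finset.sum_add_distrib,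
      Finset.sum_ite_eq' (Finset.range (k+1)) ((b:ℕ)),
      Finset.sum_ite_eq' (Finset.range (k+1)) ((a:ℕ))]
    by_cases h : k + 1 = (a:ℕ) + (b:ℕ)
    · have hbmem : (b:ℕ) ∈ Finset.range (k+1) := Finset.mem_range.mpr (by have := a.pos; omega)
      have hamem : (a:ℕ) ∈ Finset.range (k+1) := Finset.mem_range.mpr (by have := b.pos; omega)
      rw [if_pos hbmem, if_pos hamem, if_pos h, if_pos h, if_pos h, smul_eq_mul]
      have hk : (k:ℂ) + 1 = ((a:ℕ):ℂ) + ((b:ℕ):ℂ) := by exact_mod_cast congrArg (Nat.cast : ℕ → ℂ) h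
      have hA : ((a:ℕ):ℂ) ≠ 0 := Nat.cast_ne_zero.mpr a.pos.ne'
      have hB : ((b:ℕ):ℂ) ≠ 0 := Nat.cast_ne_zero.mpr b.pos.ne'
      push_cast
      rw [hk]
      have hAB : ((a:ℕ):ℂ) + ((b:ℕ):ℂ) ≠ 0 := by
        intro hc
        apply hA
        have h1 : (0:ℝ) < ((a:ℕ):ℝ) + ((b:ℕ):ℝ) := by
          have := a.pos; have := b.pos
          positivity
        exact absurd (by exact_mod_cast hc) h1.ne'
      have e : (2⁻¹:ℂ) * (2 * ((b:ℕ):ℂ))⁻¹ + 2⁻¹ * (2 * ((a:ℕ):ℂ))⁻¹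
          = (((a:ℕ):ℂ) + ((b:ℕ):ℂ)) * (4 * ((a:ℕ):ℂ) * ((b:ℕ):ℂ))⁻¹ := by
        field_simp
        ring
      rw [e, ← mul_assoc, inv_mul_cancel₀ hAB, one_mul]
    · rw [if_neg h]
      simp [h]

end

noncomputable section
open Finset MvPolynomial

abbrev wt : ℕ+ → ℕ := fun k => (k : ℕ)

lemma S_hom (k : ℕ) : (S k).IsWeightedHomogeneous wt k := by
  induction k using Nat.strong_induction_on with
  | _ k ih =>
  cases k with
  | zero => simpa [S_zero] using isWeightedHomogeneous_one ℂ wt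
  | succ k =>
    rw [S_succ, ← mem_weightedHomogeneousSubmodule]
    apply Submodule.smul_mem
    apply Submodule.sum_mem
    intro j hj
    have hjk : j ≤ k := by simpa [Nat.lt_succ_iff] using hj
    rw [mem_weightedHomogeneousSubmodule]
    have h1 : (MvPolynomial.C (2⁻¹:ℂ) * MvPolynomial.X ((k - j).succPNat) : A).IsWeightedHomogeneous wt (0 + (k - j + 1)) :=
      (isWeightedHomogeneous_C wt _).mul (by
        have := isWeightedHomogeneous_X ℂ wt ((k - j).succPNat)
        simpa [wt, Nat.succPNat] using this)
    have h2 := h1.mul (ih j (by omega))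
    have he : (0 + (k - j + 1)) + j = k + 1 := by omega
    rw [he] at h2
    exact h2

lemma P_hom (n m : ℕ) : (P n m).IsWeightedHomogeneous wt (n + m) := by
  rw [← mem_weightedHomogeneousSubmodule, P]
  apply Submodule.sum_mem
  intro k hk
  have hkn : k ≤ n := by simpa [Nat.lt_succ_iff] using hk
  apply Submodule.smul_mem
  rw [mem_weightedHomogeneousSubmodule]
  have h2 := (S_hom (m + k)).mul (S_hom (n - k))
  have he : (m + k) + (n - k) = n + m := by omega
  rw [he] at h2
  exact h2

/-- `cc k = (-1)^k C(1/2,k)`. -/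
def cc (k : ℕ) : ℂ := (-1 : ℂ)^k * halfChoose k

lemma cc_zero : cc 0 = 1 := by simp [cc, halfChoose]

lemma P_eq (n m : ℕ) : P n m = ∑ k ∈ Finset.range (n+1), cc k • (S (m+k) * S (n-k)) := rfl

lemma P_zero_zero : P 0 0 = 1 := by
  rw [P_eq]
  simp [cc_zero, S_zero]

lemma D1_P (a : ℕ+) (n m : ℕ) (hm : 1 ≤ m) (ha : (a:ℕ) = n + m) :
    D1 a (P n m) = cc n * ((2 * (a:ℕ) : ℕ) : ℂ)⁻¹ := by
  rw [P_eq, map_sum]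
  have hterm : ∀ k ∈ Finset.range (n+1),
      D1 a (cc k • (S (m+k) * S (n-k))) = if k = n then cc n * ((2 * (a:ℕ) : ℕ) : ℂ)⁻¹ else 0 := by
    intro k hk
    have hkn : k ≤ n := by simpa [Nat.lt_succ_iff] using hk
    rw [map_smul, smul_eq_mul, D1_mul, Efun_S, Efun_S, D1_S, D1_S]
    by_cases h : k = n
    · subst h
      rw [if_pos (rfl : k = k), if_pos (by omega : m + k = (a:ℕ)),
        if_pos (by omega : k - k = 0), if_neg (by omega : ¬ m + k = 0),
        if_neg (by omega : ¬ k - k = (a:ℕ))]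
      ring1
    · have hkn' : k < n := by omega
      rw [if_neg h, if_neg (by omega : ¬ n - k = 0), if_neg (by omega : ¬ m + k = 0),
        if_neg (by omega : ¬ m + k = (a:ℕ))]
      ring1
  rw [Finset.sum_congr rfl hterm, Finset.sum_ite_eq' (Finset.range (n+1)) n,
    if_pos (Finset.mem_range.mpr (Nat.lt_succ_self n))]

end

noncomputable section
open Finset MvPolynomial

lemma inv_mul_inv_eq (a b : ℕ+) :
    ((2 * (b:ℕ) : ℕ) : ℂ)⁻¹ * ((2 * (a:ℕ) : ℕ) : ℂ)⁻¹ = ((4 * (a:ℕ) * (b:ℕ) : ℕ) : ℂ)⁻¹ := by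
  push_cast
  rw [← mul_inv]
  congr 1
  ring

lemma D2_P (a b : ℕ+) (n m : ℕ) (hm : 1 ≤ m) (hab : (a:ℕ) + (b:ℕ) = n + m)
    (hmb : (b:ℕ) ≤ m) (hna : n ≤ (a:ℕ)) :
    D2 a b (P n m) =
      ((if n = (a:ℕ) then 1 else 0) + (if (b:ℕ) ≤ n then cc (n - (b:ℕ)) else 0) + cc n)
        * ((4 * (a:ℕ) * (b:ℕ) : ℕ) : ℂ)⁻¹ := by
  have hb1 := b.pos
  have ha1 := a.pos
  rw [P_eq, map_sum]
  have hterm : ∀ k ∈ Finset.range (n+1),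
      D2 a b (cc k • (S (m+k) * S (n-k))) =
        (if k = 0 then (if n = (a:ℕ) then cc 0 * (((2 * (b:ℕ) : ℕ):ℂ)⁻¹ * ((2 * (a:ℕ) : ℕ):ℂ)⁻¹) else 0) else 0)
        + (if k = n - (b:ℕ) then (if (b:ℕ) ≤ n then cc (n - (b:ℕ)) * (((2 * (a:ℕ) : ℕ):ℂ)⁻¹ * ((2 * (b:ℕ) : ℕ):ℂ)⁻¹) else 0) else 0)
        + (if k = n then cc n * ((4 * (a:ℕ) * (b:ℕ) : ℕ):ℂ)⁻¹ else 0) := by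
    intro k hk
    have hkn : k ≤ n := by simpa [Nat.lt_succ_iff] using hk
    rw [map_smul, smul_eq_mul, D2_mul, Efun_S, Efun_S, D1_S, D1_S, D1_S, D1_S, D2_S, D2_S,
      if_neg (by omega : ¬ m + k = 0)]
    have e2 : cc k * ((if m + k = (b:ℕ) then ((2*(b:ℕ):ℕ):ℂ)⁻¹ else 0) * (if n - k = (a:ℕ) then ((2*(a:ℕ):ℕ):ℂ)⁻¹ else 0))
        = (if k = 0 then (if n = (a:ℕ) then cc 0 * (((2*(b:ℕ):ℕ):ℂ)⁻¹ * ((2*(a:ℕ):ℕ):ℂ)⁻¹) else 0) else 0) := by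
      by_cases hk0 : k = 0
      · by_cases hna' : n = (a:ℕ)
        · rw [if_pos hk0, if_pos hna', if_pos (by omega : m + k = (b:ℕ)),
            if_pos (by omega : n - k = (a:ℕ)), hk0, cc_zero]
          try ring1
        · rw [if_pos hk0, if_neg hna', if_neg (by omega : ¬ n - k = (a:ℕ))]
          ring1
      · rw [if_neg hk0, if_neg (by omega : ¬ m + k = (b:ℕ))]
        ring1
    have e3 : cc k * ((if m + k = (a:ℕ) then ((2*(a:ℕ):ℕ):ℂ)⁻¹ else 0) * (if n - k = (b:ℕ) then ((2*(b:ℕ):ℕ):ℂ)⁻¹ else 0))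
        = (if k = n - (b:ℕ) then (if (b:ℕ) ≤ n then cc (n - (b:ℕ)) * (((2*(a:ℕ):ℕ):ℂ)⁻¹ * ((2*(b:ℕ):ℕ):ℂ)⁻¹) else 0) else 0) := by
      by_cases hbn : (b:ℕ) ≤ n
      · by_cases hknb : k = n - (b:ℕ)
        · rw [if_pos hknb, if_pos hbn, if_pos (by omega : m + k = (a:ℕ)),
            if_pos (by omega : n - k = (b:ℕ)), hknb]
          try ring1
        · rw [if_neg hknb, if_neg (by omega : ¬ n - k = (b:ℕ))]
          ring1
      · rw [if_neg (by omega : ¬ n - k = (b:ℕ))]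
        split_ifs <;> ring1
    have e4 : cc k * ((if m + k = (a:ℕ) + (b:ℕ) then ((4*(a:ℕ)*(b:ℕ):ℕ):ℂ)⁻¹ else 0) * (if n - k = 0 then (1:ℂ) else 0))
        = (if k = n then cc n * ((4*(a:ℕ)*(b:ℕ):ℕ):ℂ)⁻¹ else 0) := by
      by_cases hkn' : k = n
      · rw [if_pos hkn', if_pos (by omega : m + k = (a:ℕ) + (b:ℕ)),
          if_pos (by omega : n - k = 0), hkn']
        try ring1
      · rw [if_neg hkn', if_neg (by omega : ¬ m + k = (a:ℕ) + (b:ℕ))]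
        ring1
    linear_combination e2 + e3 + e4
  rw [Finset.sum_congr rfl hterm, Finset.sum_add_distrib, Finset.sum_add_distrib,
    Finset.sum_ite_eq' (Finset.range (n+1)) 0,
    Finset.sum_ite_eq' (Finset.range (n+1)) (n - (b:ℕ)),
    Finset.sum_ite_eq' (Finset.range (n+1)) n,
    if_pos (Finset.mem_range.mpr (by omega : 0 < n + 1)),
    if_pos (Finset.mem_range.mpr (by omega : n - (b:ℕ) < n + 1)),
    if_pos (Finset.mem_range.mpr (by omega : n < n + 1)),
    cc_zero, inv_mul_inv_eq a b]
  have e5 : ((2*(a:ℕ):ℕ):ℂ)⁻¹ * ((2*(b:ℕ):ℕ):ℂ)⁻¹ = ((4*(a:ℕ)*(b:ℕ):ℕ):ℂ)⁻¹ := by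
    rw [mul_comm]
    exact inv_mul_inv_eq a b
  rw [e5]
  split_ifs <;> ring1
end

noncomputable section
open Finset MvPolynomial Submodule

lemma lin_indep (d : ℕ) :
    LinearIndependent ℂ (fun i : Fin (d/2 + 1) => P (i:ℕ) (d - (i:ℕ))) := by
  rw [Fintype.linearIndependent_iff]
  intro g hg
  have key : ∀ i : Fin (d/2+1), (∀ j : Fin (d/2+1), (i:ℕ) < (j:ℕ) → g j = 0) → g i = 0 := by
    intro i hi
    by_cases hd0 : d = 0
    · subst hd0
      have h1 := congrArg Efun hg
      rw [map_sum, map_zero] at h1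
      have hval : ∀ j : Fin (0/2+1), Efun (g j • P (j:ℕ) (0 - (j:ℕ))) = g j := by
        intro j
        have hj0 : (j:ℕ) = 0 := by have := j.2; omega
        rw [map_smul, hj0, smul_eq_mul]
        norm_num [P_zero_zero, Efun_apply]
      rw [Finset.sum_congr rfl (fun j _ => hval j)] at h1
      rw [Finset.sum_eq_single_of_mem i (Finset.mem_univ i)
        (fun j _ hj => absurd (Fin.ext (by have := j.2; have := i.2; omega : (j:ℕ) = (i:ℕ))) hj)] at h1
      exact h1
    by_cases hi0 : (i:ℕ) = 0
    · -- apply D1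
      have hd1 : 1 ≤ d := by omega
      set dp : ℕ+ := ⟨d, by omega⟩ with hdp
      have h0 := congrArg (D1 dp) hg
      rw [map_sum, map_zero] at h0
      have hval : ∀ j : Fin (d/2+1),
          D1 dp (g j • P (j:ℕ) (d - (j:ℕ))) = g j * (cc (j:ℕ) * ((2 * d : ℕ):ℂ)⁻¹) := by
        intro j
        have hj2 : (j:ℕ) ≤ d/2 := Nat.lt_succ_iff.mp j.2
        rw [map_smul, smul_eq_mul, D1_P dp (j:ℕ) (d - (j:ℕ)) (by omega)
          (by show d = (j:ℕ) + (d - (j:ℕ)); omega)]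
        rfl
      rw [Finset.sum_congr rfl (fun j _ => hval j)] at h0
      have hsingle : ∀ j : Fin (d/2+1), j ∈ Finset.univ → j ≠ i →
          g j * (cc (j:ℕ) * ((2 * d : ℕ):ℂ)⁻¹) = 0 := by
        intro j _ hj
        have hij : (i:ℕ) < (j:ℕ) := by
          rcases Nat.lt_or_ge (i:ℕ) (j:ℕ) with h | h
          · exact h
          · exact absurd (Fin.ext (by omega : (j:ℕ) = (i:ℕ))) hj
        rw [hi j hij, zero_mul]
      rw [Finset.sum_eq_single_of_mem i (Finset.mem_univ i) hsingle] at h0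
      have hcc : cc (i:ℕ) = 1 := by rw [hi0, cc_zero]
      rw [hcc, one_mul] at h0
      have hne : ((2 * d : ℕ):ℂ)⁻¹ ≠ 0 :=
        inv_ne_zero (Nat.cast_ne_zero.mpr (by omega))
      exact (mul_eq_zero.mp h0).resolve_right hne
    · -- i ≥ 1 : apply D2 (d-i) i minus a multiple of D1 d
      have hii : 1 ≤ (i:ℕ) := by omega
      have hiN : (i:ℕ) ≤ d / 2 := Nat.lt_succ_iff.mp i.2
      have hd2 : 2 ≤ d := by omega
      set ap : ℕ+ := ⟨d - (i:ℕ), by omega⟩ with hap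
      set bp : ℕ+ := ⟨(i:ℕ), by omega⟩ with hbp
      set dp : ℕ+ := ⟨d, by omega⟩ with hdp
      set κ : ℂ := ((4 * (d - (i:ℕ)) * (i:ℕ) : ℕ):ℂ)⁻¹ with hκ
      set L : A →ₗ[ℂ] ℂ := D2 ap bp - (((2 * d : ℕ):ℂ) * κ) • D1 dp with hL
      have h0 := congrArg L hg
      rw [map_sum, map_zero] at h0
      have hval : ∀ j : Fin (d/2+1),
          L (g j • P (j:ℕ) (d - (j:ℕ))) =
            g j * (((if (j:ℕ) = d - (i:ℕ) then (1:ℂ) else 0)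
              + (if (i:ℕ) ≤ (j:ℕ) then cc ((j:ℕ) - (i:ℕ)) else 0)) * κ) := by
        intro j
        have hj2 : (j:ℕ) ≤ d/2 := Nat.lt_succ_iff.mp j.2
        rw [map_smul, smul_eq_mul]
        congr 1
        rw [hL, LinearMap.sub_apply, LinearMap.smul_apply, smul_eq_mul,
          D2_P ap bp (j:ℕ) (d - (j:ℕ)) (by omega)
            (by show (d - (i:ℕ)) + (i:ℕ) = (j:ℕ) + (d - (j:ℕ)); omega)
            (by show (i:ℕ) ≤ d - (j:ℕ); omega)
            (by show (j:ℕ) ≤ d - (i:ℕ); omega),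
          D1_P dp (j:ℕ) (d - (j:ℕ)) (by omega)
            (by show d = (j:ℕ) + (d - (j:ℕ)); omega)]
        show (((if (j:ℕ) = d - (i:ℕ) then (1:ℂ) else 0)
            + (if (i:ℕ) ≤ (j:ℕ) then cc ((j:ℕ) - (i:ℕ)) else 0) + cc (j:ℕ)) * κ)
            - (((2 * d : ℕ):ℂ) * κ) * (cc (j:ℕ) * ((2 * d : ℕ):ℂ)⁻¹)
          = (((if (j:ℕ) = d - (i:ℕ) then (1:ℂ) else 0)
            + (if (i:ℕ) ≤ (j:ℕ) then cc ((j:ℕ) - (i:ℕ)) else 0)) * κ)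
        have h2d : ((2 * d : ℕ):ℂ) * ((2 * d : ℕ):ℂ)⁻¹ = 1 :=
          mul_inv_cancel₀ (Nat.cast_ne_zero.mpr (by omega))
        linear_combination (-(cc (j:ℕ)) * κ) * h2d
      rw [Finset.sum_congr rfl (fun j _ => hval j)] at h0
      have hsingle : ∀ j : Fin (d/2+1), j ∈ Finset.univ → j ≠ i →
          g j * (((if (j:ℕ) = d - (i:ℕ) then (1:ℂ) else 0)
            + (if (i:ℕ) ≤ (j:ℕ) then cc ((j:ℕ) - (i:ℕ)) else 0)) * κ) = 0 := by
        intro j _ hj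
        have hj2 : (j:ℕ) ≤ d/2 := Nat.lt_succ_iff.mp j.2
        rcases Nat.lt_or_ge (i:ℕ) (j:ℕ) with h | h
        · rw [hi j h, zero_mul]
        · have hji : (j:ℕ) < (i:ℕ) := by
            rcases Nat.lt_or_ge (j:ℕ) (i:ℕ) with h2 | h2
            · exact h2
            · exact absurd (Fin.ext (by omega : (j:ℕ) = (i:ℕ))) hj
          rw [if_neg (by omega), if_neg (by omega)]
          ring1
      rw [Finset.sum_eq_single_of_mem i (Finset.mem_univ i) hsingle] at h0
      rw [if_pos (le_refl (i:ℕ)), Nat.sub_self, cc_zero] at h0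
      have hκne : κ ≠ 0 := by
        rw [hκ]
        have hpos : 0 < 4 * (d - (i:ℕ)) * (i:ℕ) :=
          Nat.mul_pos (Nat.mul_pos (by norm_num) (by omega)) (by omega)
        exact inv_ne_zero (Nat.cast_ne_zero.mpr hpos.ne')
      have hfac : ((if (i:ℕ) = d - (i:ℕ) then (1:ℂ) else 0) + 1) * κ ≠ 0 := by
        apply mul_ne_zero _ hκne
        split_ifs <;> norm_num
      exact (mul_eq_zero.mp h0).resolve_right hfac
  have main : ∀ t : ℕ, ∀ i : Fin (d/2+1), d/2 ≤ (i:ℕ) + t → g i = 0 := by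
    intro t
    induction t with
    | zero =>
      intro i hit
      exact key i (fun j hj => absurd (Nat.lt_succ_iff.mp j.2) (by omega))
    | succ t ih =>
      intro i hit
      by_cases h : d/2 ≤ (i:ℕ) + t
      · exact ih i h
      · exact key i (fun j hj => ih j (by omega))
  intro i
  exact main (d/2) i (by omega)

end

open Finset MvPolynomial

/-- For every `d ≥ 0`, the homogeneous degree-`d` component (for the grading in which
`x_k` has degree `k`) of the subspace `span_ℂ{P_{n,m} : m ≥ n ≥ 0}` of `A` has
dimension `⌊d/2⌋ + 1`. -/
theorem finrank_homogeneous_component (d : ℕ) :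
    Module.finrank ℂ
      ↥(Submodule.span ℂ {p : A | ∃ n m : ℕ, n ≤ m ∧ p = P n m} ⊓
        MvPolynomial.weightedHomogeneousSubmodule ℂ (fun k : ℕ+ => (k : ℕ)) d) =
      d / 2 + 1 := by
  have hspan : Submodule.span ℂ {p : A | ∃ n m : ℕ, n ≤ m ∧ p = P n m} ⊓
      MvPolynomial.weightedHomogeneousSubmodule ℂ (fun k : ℕ+ => (k : ℕ)) d
      = Submodule.span ℂ (Set.range (fun i : Fin (d/2+1) => P (i:ℕ) (d - (i:ℕ)))) := by
    apply le_antisymm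
    · intro x hx
      rw [Submodule.mem_inf] at hx
      obtain ⟨hx1, hx2⟩ := hx
      have hhom : x.IsWeightedHomogeneous wt d :=
        (mem_weightedHomogeneousSubmodule _ _ _ _).mp hx2
      have hmap : weightedHomogeneousComponent wt d x ∈
          Submodule.map (weightedHomogeneousComponent wt d)
            (Submodule.span ℂ {p : A | ∃ n m : ℕ, n ≤ m ∧ p = P n m}) :=
        Submodule.mem_map_of_mem hx1
      rw [Submodule.map_span] at hmap
      have hle : Submodule.span ℂ
            ((weightedHomogeneousComponent wt d) '' {p : A | ∃ n m : ℕ, n ≤ m ∧ p = P n m})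
          ≤ Submodule.span ℂ (Set.range (fun i : Fin (d/2+1) => P (i:ℕ) (d - (i:ℕ)))) := by
        apply Submodule.span_le.mpr
        rintro y ⟨p, ⟨n, m, hnm, rfl⟩, rfl⟩
        by_cases hdeg : n + m = d
        · have heq : weightedHomogeneousComponent wt d (P n m) = P n m := by
            have h := P_hom n m
            rw [hdeg] at h
            exact h.weightedHomogeneousComponent_same
          rw [heq]
          apply Submodule.subset_span
          refine ⟨⟨n, by omega⟩, ?_⟩
          show P n (d - n) = P n m
          congr 1
          omega
        · rw [(P_hom n m).weightedHomogeneousComponent_ne d (fun h => hdeg h.symm)]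
          exact Submodule.zero_mem _
      have hfin := hle hmap
      rwa [hhom.weightedHomogeneousComponent_same] at hfin
    · apply Submodule.span_le.mpr
      rintro y ⟨i, rfl⟩
      have hi2 : (i:ℕ) ≤ d/2 := Nat.lt_succ_iff.mp i.2
      rw [SetLike.mem_coe, Submodule.mem_inf]
      constructor
      · exact Submodule.subset_span ⟨(i:ℕ), d - (i:ℕ), by omega, rfl⟩
      · rw [mem_weightedHomogeneousSubmodule]
        have h := P_hom (i:ℕ) (d - (i:ℕ))
        have he : (i:ℕ) + (d - (i:ℕ)) = d := by omega
        rwa [he] at h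
  rw [hspan, finrank_span_eq_card (lin_indep d), Fintype.card_fin]
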